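/- Fix x_i, x_j ∈ ℝ^p, λ > 0, and ω > 0, and define J(u_i, u_j) := (1/2)(‖x_i − u_i‖₂² + ‖x_j − u_j‖₂²) + λω‖u_i − u_j‖₂ for (u_i, u_j) ∈ ℝ^p × ℝ^p. If λω ≥ ‖x_i − x_j‖₂ / 2, then J attains its minimum over ℝ^p × ℝ^p uniquely at u_i = u_j = (x_i + x_j)/2. -/

import Mathlib

/-- Two-point convex clustering objective: when `λω ≥ ‖x_i - x_j‖₂/2`, the objective
`J(u_i, u_j) = (1/2)(‖x_i - u_i‖₂² + ‖x_j - u_j‖₂²) + λω‖u_i - u_j‖₂` is uniquely minimized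
at `u_i = u_j = (x_i + x_j)/2`. -/
theorem stmt13 {p : ℕ} (xi xj : EuclideanSpace ℝ (Fin p)) (lam ω : ℝ)
    (hlam : 0 < lam) (hω : 0 < ω) (h : ‖xi - xj‖ / 2 ≤ lam * ω) :
    let J : EuclideanSpace ℝ (Fin p) × EuclideanSpace ℝ (Fin p) → ℝ := fun u =>
      (1 / 2) * (‖xi - u.1‖ ^ 2 + ‖xj - u.2‖ ^ 2) + lam * ω * ‖u.1 - u.2‖
    let m : EuclideanSpace ℝ (Fin p) := (2 : ℝ)⁻¹ • (xi + xj)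
    (∀ u, J (m, m) ≤ J u) ∧ (∀ u, J u ≤ J (m, m) → u = (m, m)) := by
  intro J m
  have hc : (0:ℝ) < lam * ω := mul_pos hlam hω
  have key : ∀ u : EuclideanSpace ℝ (Fin p) × EuclideanSpace ℝ (Fin p),
      J (m, m) + (1/2) * (‖m - u.1‖ ^ 2 + ‖m - u.2‖ ^ 2) ≤ J u := by
    intro u
    set d : EuclideanSpace ℝ (Fin p) := xi - xj with hd
    set s : EuclideanSpace ℝ (Fin p) := m - u.1 with hs
    set r : EuclideanSpace ℝ (Fin p) := m - u.2 with hr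
    have h1 : xi - u.1 = (2:ℝ)⁻¹ • d + s := by
      simp only [hd, hs, m]; module
    have h2 : xj - u.2 = -((2:ℝ)⁻¹ • d) + r := by
      simp only [hd, hr, m]; module
    have h3 : u.1 - u.2 = r - s := by simp only [hs, hr]; abel
    have hm1 : xi - m = (2:ℝ)⁻¹ • d := by simp only [hd, m]; module
    have hm2 : xj - m = -((2:ℝ)⁻¹ • d) := by simp only [hd, m]; module
    have e1 : ‖xi - u.1‖^2
        = ‖(2:ℝ)⁻¹ • d‖^2 + 2 * (inner ℝ ((2:ℝ)⁻¹ • d) s : ℝ) + ‖s‖^2 := by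
      rw [h1]; exact norm_add_sq_real _ _
    have e2 : ‖xj - u.2‖^2
        = ‖(2:ℝ)⁻¹ • d‖^2 - 2 * (inner ℝ ((2:ℝ)⁻¹ • d) r : ℝ) + ‖r‖^2 := by
      rw [h2, norm_add_sq_real, norm_neg, inner_neg_left]; ring
    have hJu : J u = (1/2) * ((‖(2:ℝ)⁻¹ • d‖^2 + 2 * (inner ℝ ((2:ℝ)⁻¹ • d) s : ℝ) + ‖s‖^2)
        + (‖(2:ℝ)⁻¹ • d‖^2 - 2 * (inner ℝ ((2:ℝ)⁻¹ • d) r : ℝ) + ‖r‖^2))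
        + lam * ω * ‖r - s‖ := by
      simp only [J, e1, e2, h3]
    have hJm : J (m, m) = ‖(2:ℝ)⁻¹ • d‖^2 := by
      simp only [J, hm1, hm2, norm_neg, sub_self, norm_zero, mul_zero]
      ring
    have hinner : (inner ℝ ((2:ℝ)⁻¹ • d) s : ℝ) - (inner ℝ ((2:ℝ)⁻¹ • d) r : ℝ)
        = (inner ℝ ((2:ℝ)⁻¹ • d) (s - r) : ℝ) := (inner_sub_right _ _ _).symm
    have habs : |(inner ℝ ((2:ℝ)⁻¹ • d) (s - r) : ℝ)| ≤ ‖(2:ℝ)⁻¹ • d‖ * ‖s - r‖ :=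
      abs_real_inner_le_norm _ _
    have hnd : ‖(2:ℝ)⁻¹ • d‖ = ‖d‖ / 2 := by
      rw [norm_smul]; simp [abs_of_nonneg]; ring
    have hsr : ‖s - r‖ = ‖r - s‖ := norm_sub_rev _ _
    have hnn : (0:ℝ) ≤ ‖r - s‖ := norm_nonneg _
    have hbound : -(lam * ω) * ‖r - s‖ ≤ (inner ℝ ((2:ℝ)⁻¹ • d) (s - r) : ℝ) := by
      have h1' : -(‖(2:ℝ)⁻¹ • d‖ * ‖s - r‖) ≤ (inner ℝ ((2:ℝ)⁻¹ • d) (s - r) : ℝ) :=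
        neg_le_of_abs_le habs
      have h2' : ‖(2:ℝ)⁻¹ • d‖ * ‖s - r‖ ≤ (lam * ω) * ‖r - s‖ := by
        rw [hnd, hsr]
        exact mul_le_mul_of_nonneg_right h hnn
      linarith
    rw [hJu, hJm]
    nlinarith [hinner, hbound]
  clear_value J m
  constructor
  · intro u
    have := key u
    have hs2 : (0:ℝ) ≤ ‖m - u.1‖^2 := sq_nonneg _
    have hr2 : (0:ℝ) ≤ ‖m - u.2‖^2 := sq_nonneg _
    linarith
  · intro u hu
    have := key u
    have hs2 : (0:ℝ) ≤ ‖m - u.1‖^2 := sq_nonneg _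
    have hr2 : (0:ℝ) ≤ ‖m - u.2‖^2 := sq_nonneg _
    have h1 : ‖m - u.1‖^2 = 0 := by linarith
    have h2 : ‖m - u.2‖^2 = 0 := by linarith
    have e1 : u.1 = m := by
      have hz : ‖m - u.1‖ = 0 := pow_eq_zero_iff (two_ne_zero) |>.mp h1
      exact (sub_eq_zero.mp (norm_eq_zero.mp hz)).symm
    have e2 : u.2 = m := by
      have hz : ‖m - u.2‖ = 0 := pow_eq_zero_iff (two_ne_zero) |>.mp h2
      exact (sub_eq_zero.mp (norm_eq_zero.mp hz)).symm
    exact Prod.ext e1 e2
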